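/- Let L ≥ 1, v : ZMod L → ℂ, H = Matrix.circulant v, with DFT values λ_k = Σ_{m ∈ ZMod L} v(m) · exp(−2π√−1 · (k.val · m.val)/L), and let s > 0 be real. Set A = Hᴴ * H + s⁻¹ • 1. Then trace(A⁻¹) − s⁻¹ · trace(A⁻¹ * A⁻¹) = Σ_{k ∈ ZMod L} |λ_k|² / (|λ_k|² + s⁻¹)². Equivalently (multiplying by s), (1/L) Σ_k s/(s|λ_k|² + 1) − (1/L) Σ_k s/(s|λ_k|² + 1)² = (1/L) Σ_k s²|λ_k|²/(s|λ_k|² + 1)². (Equation (26) of the paper: the variance σ²_ñ(ℓ) of the MMSE residual noise about its conditional mean.) -/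

import Mathlib

open Matrix

/-- The DFT values of the first row of the circulant matrix `circulant v`:
`λ_k = ∑_m v(m) exp(-2π√-1 · k m / L)`. -/
noncomputable def circDFT (L : ℕ) [NeZero L] (v : ZMod L → ℂ) (k : ZMod L) : ℂ :=
  ∑ m : ZMod L,
    v m * Complex.exp (-(2 * (Real.pi : ℂ) * Complex.I) * ((k.val : ℂ) * (m.val : ℂ)) / (L : ℂ))

namespace MMSEAux

variable {L : ℕ} [NeZero L]

lemma conj_stdAddChar (a : ZMod L) :
    (starRingEnd ℂ) (ZMod.stdAddChar a) = ZMod.stdAddChar (-a) := by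
  rw [ZMod.stdAddChar_apply, ZMod.stdAddChar_apply, AddChar.map_neg_eq_inv]
  exact (Circle.coe_inv_eq_conj _).symm

lemma exp_eq_char (k m : ZMod L) :
    Complex.exp (-(2 * (Real.pi : ℂ) * Complex.I) * ((k.val : ℂ) * (m.val : ℂ)) / (L : ℂ))
      = ZMod.stdAddChar (-(k * m)) := by
  have h : (-(k * m) : ZMod L) = ((-(k.val * m.val : ℤ) : ℤ) : ZMod L) := by
    push_cast
    rw [ZMod.natCast_val, ZMod.natCast_val, ZMod.cast_id, ZMod.cast_id]
  rw [h, ZMod.stdAddChar_coe]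
  congr 1
  push_cast
  ring

/-- The (unnormalized) DFT matrix. -/
noncomputable def Fm (L : ℕ) [NeZero L] : Matrix (ZMod L) (ZMod L) ℂ :=
  Matrix.of fun k m => ZMod.stdAddChar (-(k * m))

lemma Fm_mul_conjTranspose : Fm L * (Fm L)ᴴ = (L : ℂ) • 1 := by
  ext k k'
  rw [mul_apply]
  have : ∀ m : ZMod L, Fm L k m * (Fm L)ᴴ m k'
      = ZMod.stdAddChar (m * (k' - k)) := by
    intro m
    rw [conjTranspose_apply]
    show ZMod.stdAddChar (-(k * m)) * star (ZMod.stdAddChar (-(k' * m))) = _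
    rw [RCLike.star_def, conj_stdAddChar, neg_neg, ← AddChar.map_add_eq_mul]
    congr 1
    ring
  simp_rw [this]
  rw [AddChar.sum_mulShift _ (ZMod.isPrimitive_stdAddChar L)]
  simp [Matrix.one_apply, sub_eq_zero, eq_comm, ZMod.card]

lemma conjTranspose_mul_Fm : (Fm L)ᴴ * Fm L = (L : ℂ) • 1 := by
  ext m m'
  rw [mul_apply]
  have : ∀ k : ZMod L, (Fm L)ᴴ m k * Fm L k m'
      = ZMod.stdAddChar (k * (m - m')) := by
    intro k
    rw [conjTranspose_apply]
    show star (ZMod.stdAddChar (-(k * m))) * ZMod.stdAddChar (-(k * m')) = _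
    rw [RCLike.star_def, conj_stdAddChar, neg_neg, ← AddChar.map_add_eq_mul]
    congr 1
    ring
  simp_rw [this]
  rw [AddChar.sum_mulShift _ (ZMod.isPrimitive_stdAddChar L)]
  simp [Matrix.one_apply, sub_eq_zero, ZMod.card]

lemma Fm_mul_circulant (w : ZMod L → ℂ) :
    Fm L * Matrix.circulant w
      = Matrix.diagonal (fun k => ∑ m : ZMod L, w m * ZMod.stdAddChar (-(k * m))) * Fm L := by
  ext k j
  rw [mul_apply, diagonal_mul]
  calc ∑ m : ZMod L, Fm L k m * Matrix.circulant w m j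
      = ∑ t : ZMod L, Fm L k (t + j) * Matrix.circulant w (t + j) j := by
        exact (Fintype.sum_equiv (Equiv.addRight j) _ _ (fun t => rfl)).symm
    _ = ∑ t : ZMod L, (w t * ZMod.stdAddChar (-(k * t))) * Fm L k j := by
        refine Finset.sum_congr rfl fun t _ => ?_
        show ZMod.stdAddChar (-(k * (t + j))) * w (t + j - j) = _
        have h : (-(k * (t + j)) : ZMod L) = -(k * t) + -(k * j) := by ring
        rw [h, AddChar.map_add_eq_mul, add_sub_cancel_right]
        show _ = w t * ZMod.stdAddChar (-(k * t)) * ZMod.stdAddChar (-(k * j))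
        ring
    _ = (∑ t : ZMod L, w t * ZMod.stdAddChar (-(k * t))) * Fm L k j := by
        rw [Finset.sum_mul]

end MMSEAux

/-- Equation (26) of the paper: for a circulant channel matrix `H` with DFT
values `λ_k` and `A = Hᴴ H + s⁻¹ I` (with SNR `s > 0`), the variance of the
MMSE residual noise about its conditional mean satisfies
`trace A⁻¹ - s⁻¹ · trace (A⁻¹ A⁻¹) = ∑_k |λ_k|² / (|λ_k|² + s⁻¹)²`. -/
theorem mmse_residual_variance (L : ℕ) [NeZero L] (v : ZMod L → ℂ) (s : ℝ) (hs : 0 < s) :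
    Matrix.trace (((Matrix.circulant v)ᴴ * Matrix.circulant v +
          s⁻¹ • (1 : Matrix (ZMod L) (ZMod L) ℂ))⁻¹)
      - (s⁻¹ : ℂ) * Matrix.trace ((((Matrix.circulant v)ᴴ * Matrix.circulant v +
          s⁻¹ • (1 : Matrix (ZMod L) (ZMod L) ℂ))⁻¹) *
          (((Matrix.circulant v)ᴴ * Matrix.circulant v +
          s⁻¹ • (1 : Matrix (ZMod L) (ZMod L) ℂ))⁻¹))
      = ∑ k : ZMod L,
          ((‖circDFT L v k‖ ^ 2 /
            (‖circDFT L v k‖ ^ 2 + s⁻¹) ^ 2 : ℝ) : ℂ) := by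
  classical
  set H := Matrix.circulant v with hH
  set lam : ZMod L → ℂ := circDFT L v with hlamdef
  have hlam : ∀ k, lam k = ∑ m : ZMod L, v m * ZMod.stdAddChar (-(k * m)) := by
    intro k
    rw [hlamdef]
    exact Finset.sum_congr rfl fun m _ => by rw [MMSEAux.exp_eq_char]
  set g : ZMod L → ℝ := fun k => ‖lam k‖ ^ 2 + s⁻¹ with hg
  have hgpos : ∀ k, 0 < g k :=
    fun k => add_pos_of_nonneg_of_pos (sq_nonneg _) (inv_pos.2 hs)
  have hg0 : ∀ k, ((g k : ℝ) : ℂ) ≠ 0 := fun k => by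
    exact_mod_cast (hgpos k).ne'
  set F := MMSEAux.Fm L with hF
  set A := Hᴴ * H + s⁻¹ • (1 : Matrix (ZMod L) (ZMod L) ℂ) with hA
  have hsmul : s⁻¹ • (1 : Matrix (ZMod L) (ZMod L) ℂ) = ((s⁻¹ : ℝ) : ℂ) • 1 := by
    ext i j
    simp [Matrix.smul_apply, Complex.real_smul]
  -- F diagonalizes H
  have hFH : F * H = Matrix.diagonal lam * F := by
    rw [hH, hF, MMSEAux.Fm_mul_circulant]
    congr 1
    exact congrArg _ (funext fun k => (hlam k).symm)
  -- F diagonalizes Hᴴ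
  have hFHc : F * Hᴴ = Matrix.diagonal (fun k => (starRingEnd ℂ) (lam k)) * F := by
    rw [hH, Matrix.conjTranspose_circulant, hF, MMSEAux.Fm_mul_circulant]
    refine congrArg (· * MMSEAux.Fm L) (congrArg Matrix.diagonal (funext fun k => ?_))
    rw [hlam k, map_sum]
    refine Fintype.sum_equiv (Equiv.neg (ZMod L)) _ _ fun m => ?_
    simp only [Equiv.neg_apply, Pi.star_apply]
    rw [RingHom.map_mul, MMSEAux.conj_stdAddChar, neg_neg, mul_neg]
    rfl
  -- F diagonalizes A
  have hFA : F * A = Matrix.diagonal (fun k => ((g k : ℝ) : ℂ)) * F := by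
    calc F * A = (F * Hᴴ) * H + ((s⁻¹ : ℝ) : ℂ) • F := by
          rw [hA, Matrix.mul_add, hsmul, Matrix.mul_smul, Matrix.mul_one, Matrix.mul_assoc]
      _ = Matrix.diagonal (fun k => (starRingEnd ℂ) (lam k)) * (Matrix.diagonal lam * F)
            + Matrix.diagonal (fun _ => ((s⁻¹ : ℝ) : ℂ)) * F := by
          rw [hFHc, Matrix.mul_assoc, hFH, Matrix.smul_eq_diagonal_mul]
      _ = (Matrix.diagonal (fun k => (starRingEnd ℂ) (lam k) * lam k)
            + Matrix.diagonal (fun _ => ((s⁻¹ : ℝ) : ℂ))) * F := by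
          rw [← Matrix.mul_assoc, Matrix.diagonal_mul_diagonal, Matrix.add_mul]
      _ = Matrix.diagonal (fun k => ((g k : ℝ) : ℂ)) * F := by
          rw [Matrix.diagonal_add]
          refine congrArg (· * F) (congrArg Matrix.diagonal (funext fun k => ?_))
          simp only [hg, Pi.add_apply, Complex.ofReal_add, Complex.sq_norm]
          rw [mul_comm, Complex.mul_conj]
  set P := ((L : ℂ))⁻¹ • Fᴴ with hP
  set Q := Matrix.diagonal (fun k => (((g k : ℝ) : ℂ))⁻¹) * F with hQ
  have hLne : ((L : ℕ) : ℂ) ≠ 0 := Nat.cast_ne_zero.2 (NeZero.ne L)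
  have hPF : P * F = 1 := by
    rw [hP, hF, Matrix.smul_mul, MMSEAux.conjTranspose_mul_Fm, smul_smul,
      inv_mul_cancel₀ hLne, one_smul]
  have hQP : Q * P = Matrix.diagonal (fun k => (((g k : ℝ) : ℂ))⁻¹) := by
    rw [hQ, hP, Matrix.mul_smul, Matrix.mul_assoc, hF, MMSEAux.Fm_mul_conjTranspose,
      Matrix.mul_smul, Matrix.mul_one, smul_smul, inv_mul_cancel₀ hLne, one_smul]
  have hQA : Q * A = F := by
    rw [hQ, Matrix.mul_assoc, hFA, ← Matrix.mul_assoc, Matrix.diagonal_mul_diagonal,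
      show (fun k => (((g k : ℝ) : ℂ))⁻¹ * ((g k : ℝ) : ℂ)) = fun _ => (1 : ℂ) from
        funext fun k => inv_mul_cancel₀ (hg0 k),
      Matrix.diagonal_one, Matrix.one_mul]
  have hBA : (P * Q) * A = 1 := by rw [Matrix.mul_assoc, hQA, hPF]
  have hAherm : Aᴴ = A := by
    rw [hA, hsmul, Matrix.conjTranspose_add, Matrix.conjTranspose_mul,
      Matrix.conjTranspose_conjTranspose, Matrix.conjTranspose_smul, Matrix.conjTranspose_one]
    congr 1
    rw [RCLike.star_def, Complex.conj_ofReal]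
  have hAF : A * Fᴴ = Fᴴ * Matrix.diagonal (fun k => ((g k : ℝ) : ℂ)) := by
    have h := congrArg Matrix.conjTranspose hFA
    rw [Matrix.conjTranspose_mul, Matrix.conjTranspose_mul, hAherm,
      Matrix.diagonal_conjTranspose] at h
    rw [h]
    refine congrArg (Fᴴ * ·) (congrArg Matrix.diagonal (funext fun k => ?_))
    rw [Pi.star_apply, RCLike.star_def, Complex.conj_ofReal]
  have hAB : A * (P * Q) = 1 := by
    rw [← Matrix.mul_assoc]
    have hAP : A * P = P * Matrix.diagonal (fun k => ((g k : ℝ) : ℂ)) := by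
      rw [hP, Matrix.mul_smul, hAF, Matrix.smul_mul]
    rw [hAP, Matrix.mul_assoc, hQ, ← Matrix.mul_assoc (Matrix.diagonal _),
      Matrix.diagonal_mul_diagonal,
      show (fun k => ((g k : ℝ) : ℂ) * (((g k : ℝ) : ℂ))⁻¹) = fun _ => (1 : ℂ) from
        funext fun k => mul_inv_cancel₀ (hg0 k),
      Matrix.diagonal_one, Matrix.one_mul, hPF]
  have hinv : A⁻¹ = P * Q := Matrix.inv_eq_right_inv hAB
  have htr1 : Matrix.trace (P * Q) = ∑ k : ZMod L, (((g k : ℝ) : ℂ))⁻¹ := by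
    rw [Matrix.trace_mul_comm, hQP, Matrix.trace_diagonal]
  have htr2 : Matrix.trace ((P * Q) * (P * Q))
      = ∑ k : ZMod L, (((g k : ℝ) : ℂ))⁻¹ * (((g k : ℝ) : ℂ))⁻¹ := by
    have hsq : (P * Q) * (P * Q) = (P * Matrix.diagonal (fun k => (((g k : ℝ) : ℂ))⁻¹)) * Q := by
      rw [Matrix.mul_assoc P Q (P * Q), ← Matrix.mul_assoc Q P Q, hQP, ← Matrix.mul_assoc,
        ← Matrix.mul_assoc]
    rw [hsq, Matrix.trace_mul_comm, ← Matrix.mul_assoc, hQP, Matrix.diagonal_mul_diagonal,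
      Matrix.trace_diagonal]
  rw [hinv, htr1, htr2, Finset.mul_sum, ← Finset.sum_sub_distrib]
  refine Finset.sum_congr rfl fun k _ => ?_
  have h0 : g k ≠ 0 := (hgpos k).ne'
  have hreal : (g k)⁻¹ - s⁻¹ * ((g k)⁻¹ * (g k)⁻¹)
      = ‖lam k‖ ^ 2 / (g k) ^ 2 := by
    rw [hg]
    have hs' : s ≠ 0 := hs.ne'
    have h0' : ‖lam k‖ ^ 2 + s⁻¹ ≠ 0 := by rw [hg] at h0; exact h0
    field_simp
    ring
  calc (((g k : ℝ) : ℂ))⁻¹ - (s⁻¹ : ℂ) * ((((g k : ℝ) : ℂ))⁻¹ * (((g k : ℝ) : ℂ))⁻¹)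
      = (((g k)⁻¹ - s⁻¹ * ((g k)⁻¹ * (g k)⁻¹) : ℝ) : ℂ) := by push_cast; ring
    _ = ((‖lam k‖ ^ 2 / (‖lam k‖ ^ 2 + s⁻¹) ^ 2 : ℝ) : ℂ) := by
        rw [hreal, hg]
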